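/- arXiv:2504.09127 — 3 statements merged into one kernel-verified Lean document; each statement's English description precedes it below -/
import Mathlib

section
/- Suppose f : (0,∞) → ℝ is continuous with f(r) ~ C·r^α as r → 0 and f(r) ~ C'·r^β as r → ∞, with -N < α, α + 2 < 0, and β > -2. If g is a radial solution of the inhomogeneous equation Δg = f (radial: g'' + ((N-1)/r) g' = f) given by g(r) = ∫₁^r s^{1-N} ∫₀^s ρ^{N-1} f(ρ) dρ ds, then g(r) = O(r^{α+2}) as r → 0. -/
open Real Filter Topology Asymptotics MeasureTheory

/-- If `f ~ C r^α` at `0` and `f ~ C' r^β` at `∞`, with `-N < α`, `α + 2 < 0`, `β > -2`,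
then the double-integral solution of the radial Poisson equation `Δg = f` is `O(r^{α+2})`
as `r → 0`. -/
theorem stmt6 (N : ℕ) (hN : 3 ≤ N) (f : ℝ → ℝ) (hf : ContinuousOn f (Set.Ioi 0))
    (α β C C' : ℝ) (hα1 : -(N : ℝ) < α) (hα2 : α + 2 < 0) (hβ : -2 < β)
    (h0 : Tendsto (fun r : ℝ => f r / r ^ α) (𝓝[>] 0) (𝓝 C))
    (hinf : Tendsto (fun r : ℝ => f r / r ^ β) atTop (𝓝 C')) :
    (fun r : ℝ =>
        ∫ s in (1 : ℝ)..r, s ^ (1 - (N : ℝ)) * ∫ ρ in (0 : ℝ)..s, ρ ^ ((N : ℝ) - 1) * f ρ)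
      =O[𝓝[>] 0] fun r : ℝ => r ^ (α + 2) := by
  have hN3 : (3 : ℝ) ≤ (N : ℝ) := by exact_mod_cast hN
  set M : ℝ := |C| + 1 with hMdef
  have hM : 0 < M := by positivity
  -- a bound |f ρ| ≤ M ρ^α near 0
  have hev : ∀ᶠ r in 𝓝[>] (0:ℝ), |f r / r ^ α - C| < 1 := by
    have := h0 (Metric.ball_mem_nhds C one_pos)
    filter_upwards [this] with r hr
    simpa [Real.dist_eq] using hr
  rw [eventually_nhdsWithin_iff, Metric.eventually_nhds_iff] at hev
  obtain ⟨ε', hε'0, hε'⟩ := hev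
  set ε : ℝ := min (ε' / 2) 1 with hεdef
  have hε0 : 0 < ε := by positivity
  have hε1 : ε ≤ 1 := min_le_right _ _
  have hεε' : ε < ε' := lt_of_le_of_lt (min_le_left _ _) (by linarith)
  have hfb : ∀ ρ ∈ Set.Ioc (0:ℝ) ε, |f ρ| ≤ M * ρ ^ α := by
    intro ρ hρ
    have hρ0 : 0 < ρ := hρ.1
    have hd : dist ρ 0 < ε' := by
      rw [Real.dist_eq, sub_zero, abs_of_pos hρ0]; exact lt_of_le_of_lt hρ.2 hεε'
    have h1 : |f ρ / ρ ^ α - C| < 1 := hε' hd hρ0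
    have h2 : |f ρ / ρ ^ α| ≤ M := by
      have := abs_sub_abs_le_abs_sub (f ρ / ρ ^ α) C
      rw [hMdef]; linarith
    have hpos : (0:ℝ) < ρ ^ α := Real.rpow_pos_of_pos hρ0 α
    rw [abs_div, abs_of_pos hpos] at h2
    exact (div_le_iff₀ hpos).mp h2
  -- the inner integrand
  set φ : ℝ → ℝ := fun ρ => ρ ^ ((N : ℝ) - 1) * f ρ with hφdef
  have hφcont : ContinuousOn φ (Set.Ioi 0) := by
    refine ContinuousOn.mul ?_ hf
    intro x hx
    exact (Real.continuousAt_rpow_const x _ (Or.inl (ne_of_gt hx))).continuousWithinAt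
  -- a bound for φ on [ε, 1]
  obtain ⟨B, hB⟩ := (isCompact_Icc (a := ε) (b := 1)).exists_bound_of_continuousOn
    (hφcont.mono (fun x hx => lt_of_lt_of_le hε0 hx.1))
  -- bound of φ on (0, 1]
  have hφbound : ∀ ρ ∈ Set.Ioc (0:ℝ) 1, ‖φ ρ‖ ≤ M * ρ ^ ((N:ℝ) + α - 1) + max B 0 := by
    intro ρ hρ
    have hρ0 : 0 < ρ := hρ.1
    rcases le_or_gt ρ ε with hle | hlt
    · have h1 : ‖φ ρ‖ = ρ ^ ((N:ℝ) - 1) * |f ρ| := by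
        rw [hφdef]
        simp [abs_mul, abs_of_pos (Real.rpow_pos_of_pos hρ0 _)]
      have h2 : ρ ^ ((N:ℝ) - 1) * |f ρ| ≤ ρ ^ ((N:ℝ) - 1) * (M * ρ ^ α) :=
        mul_le_mul_of_nonneg_left (hfb ρ ⟨hρ0, hle⟩) (Real.rpow_pos_of_pos hρ0 _).le
      have h3 : ρ ^ ((N:ℝ) - 1) * (M * ρ ^ α) = M * ρ ^ ((N:ℝ) + α - 1) := by
        rw [show ((N:ℝ) + α - 1) = ((N:ℝ) - 1) + α by ring, Real.rpow_add hρ0]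
        ring
      have h4 : (0:ℝ) ≤ max B 0 := le_max_right _ _
      rw [h1]; linarith [h2, h3 ▸ h2]
    · have h1 : ‖φ ρ‖ ≤ B := hB ρ ⟨hlt.le, hρ.2⟩
      have h2 : (0:ℝ) ≤ M * ρ ^ ((N:ℝ) + α - 1) := by positivity
      have : B ≤ max B 0 := le_max_left _ _
      linarith
  -- integrability of φ on (0, 1]
  have hψint : IntegrableOn (fun ρ => M * ρ ^ ((N:ℝ) + α - 1) + max B 0) (Set.Ioc 0 1) volume := by
    have h1 : IntervalIntegrable (fun ρ : ℝ => M * ρ ^ ((N:ℝ) + α - 1) + max B 0)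
        volume 0 1 := by
      exact ((intervalIntegral.intervalIntegrable_rpow' (by linarith)).const_mul M).add intervalIntegrable_const
    exact (intervalIntegrable_iff_integrableOn_Ioc_of_le zero_le_one).mp h1
  have hφmeas : AEStronglyMeasurable φ (volume.restrict (Set.Ioc (0:ℝ) 1)) :=
    (hφcont.mono (fun x hx => hx.1)).aestronglyMeasurable measurableSet_Ioc
  have hφint : IntegrableOn φ (Set.Ioc (0:ℝ) 1) volume :=
    hψint.mono' hφmeas ((ae_restrict_iff' measurableSet_Ioc).mpr (ae_of_all _ hφbound))
  have hφII : ∀ s : ℝ, 0 < s → s ≤ 1 → IntervalIntegrable φ volume 0 s := by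
    intro s hs hs1
    exact (intervalIntegrable_iff_integrableOn_Ioc_of_le hs.le).mpr
      (hφint.mono_set (Set.Ioc_subset_Ioc_right hs1))
  -- bound for F s = ∫ ρ in 0..s, φ ρ for s ∈ (0, ε]
  have hNα : (0:ℝ) < (N:ℝ) + α := by linarith
  set K0 : ℝ := M / ((N:ℝ) + α) with hK0def
  have hK0 : 0 < K0 := by positivity
  have hF : ∀ s : ℝ, 0 < s → s ≤ ε → |∫ ρ in (0:ℝ)..s, φ ρ| ≤ K0 * s ^ ((N:ℝ) + α) := by
    intro s hs hsε
    have hb : ∀ᵐ t ∂volume.restrict (Set.uIoc 0 s), ‖φ t‖ ≤ M * t ^ ((N:ℝ) + α - 1) := by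
      rw [Set.uIoc_of_le hs.le]
      refine (ae_restrict_iff' measurableSet_Ioc).mpr (ae_of_all _ ?_)
      intro t ht
      have ht0 : 0 < t := ht.1
      have h1 : ‖φ t‖ = t ^ ((N:ℝ) - 1) * |f t| := by
        rw [hφdef]
        simp [abs_mul, abs_of_pos (Real.rpow_pos_of_pos ht0 _)]
      have h2 : t ^ ((N:ℝ) - 1) * |f t| ≤ t ^ ((N:ℝ) - 1) * (M * t ^ α) :=
        mul_le_mul_of_nonneg_left (hfb t ⟨ht0, ht.2.trans hsε⟩)
          (Real.rpow_pos_of_pos ht0 _).le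
      have h3 : t ^ ((N:ℝ) - 1) * (M * t ^ α) = M * t ^ ((N:ℝ) + α - 1) := by
        rw [show ((N:ℝ) + α - 1) = ((N:ℝ) - 1) + α by ring, Real.rpow_add ht0]
        ring
      rw [h1, ← h3]; exact h2
    have hg : IntervalIntegrable (fun t : ℝ => M * t ^ ((N:ℝ) + α - 1)) volume 0 s :=
      (intervalIntegral.intervalIntegrable_rpow' (by linarith)).const_mul M
    have h4 := intervalIntegral.norm_integral_le_abs_of_norm_le hb hg
    have h5 : ∫ t in (0:ℝ)..s, M * t ^ ((N:ℝ) + α - 1) = K0 * s ^ ((N:ℝ) + α) := by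
      rw [intervalIntegral.integral_const_mul, integral_rpow (Or.inl (by linarith))]
      rw [show ((N:ℝ) + α - 1 + 1) = (N:ℝ) + α by ring, Real.zero_rpow (ne_of_gt hNα)]
      rw [hK0def]; ring
    rw [h5] at h4
    calc |∫ ρ in (0:ℝ)..s, φ ρ| ≤ |K0 * s ^ ((N:ℝ) + α)| := h4
      _ = K0 * s ^ ((N:ℝ) + α) := abs_of_nonneg (by positivity)
  -- the outer integrand
  set h : ℝ → ℝ := fun s => s ^ (1 - (N : ℝ)) * ∫ ρ in (0:ℝ)..s, φ ρ with hhdef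
  have hhb : ∀ s : ℝ, 0 < s → s ≤ ε → ‖h s‖ ≤ K0 * s ^ (α + 1) := by
    intro s hs hsε
    have h1 : ‖h s‖ = s ^ (1 - (N:ℝ)) * |∫ ρ in (0:ℝ)..s, φ ρ| := by
      rw [hhdef]
      simp [abs_mul, abs_of_pos (Real.rpow_pos_of_pos hs _)]
    have h2 : s ^ (1 - (N:ℝ)) * |∫ ρ in (0:ℝ)..s, φ ρ|
        ≤ s ^ (1 - (N:ℝ)) * (K0 * s ^ ((N:ℝ) + α)) :=
      mul_le_mul_of_nonneg_left (hF s hs hsε) (Real.rpow_pos_of_pos hs _).le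
    have h3 : s ^ (1 - (N:ℝ)) * (K0 * s ^ ((N:ℝ) + α)) = K0 * s ^ (α + 1) := by
      have he := Real.rpow_add hs (1 - (N:ℝ)) ((N:ℝ) + α)
      rw [show (1 - (N:ℝ)) + ((N:ℝ) + α) = α + 1 by ring] at he
      rw [he]; ring
    rw [h1, ← h3]; exact h2
  -- continuity / integrability of h on positive subintervals of (0,1]
  have hFcont : ContinuousOn (fun s => ∫ ρ in (0:ℝ)..s, φ ρ) (Set.Icc 0 1) := by
    have := intervalIntegral.continuousOn_primitive_interval' (hφII 1 one_pos le_rfl)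
      Set.left_mem_uIcc
    simpa [Set.uIcc_of_le (zero_le_one : (0:ℝ) ≤ 1)] using this
  have hhcont : ContinuousOn h (Set.Ioc 0 1) := by
    intro s hs
    exact ((Real.continuousAt_rpow_const s _ (Or.inl (ne_of_gt hs.1))).continuousWithinAt).mul
      ((hFcont.mono Set.Ioc_subset_Icc_self) s hs)
  have hhII : ∀ a b : ℝ, 0 < a → a ≤ b → b ≤ 1 → IntervalIntegrable h volume a b := by
    intro a b ha hab hb1
    apply ContinuousOn.intervalIntegrable
    apply hhcont.mono
    rw [Set.uIcc_of_le hab]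
    exact fun x hx => ⟨lt_of_lt_of_le ha hx.1, le_trans hx.2 hb1⟩
  -- final estimate
  set A : ℝ := ∫ s in ε..(1:ℝ), h s with hAdef
  have hεp : (0:ℝ) < ε ^ (α + 2) := Real.rpow_pos_of_pos hε0 _
  rw [Asymptotics.isBigO_iff]
  refine ⟨|A| / ε ^ (α + 2) + K0 / (-(α + 2)), ?_⟩
  filter_upwards [Ioo_mem_nhdsGT_of_mem (show (0:ℝ) ∈ Set.Ico 0 ε from ⟨le_rfl, hε0⟩)]
    with r hr
  obtain ⟨hr0, hrε⟩ := hr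
  have hrp : (0:ℝ) < r ^ (α + 2) := Real.rpow_pos_of_pos hr0 _
  have hεr : ε ^ (α + 2) ≤ r ^ (α + 2) :=
    Real.rpow_le_rpow_of_nonpos hr0 hrε.le hα2.le
  -- split the integral
  have hsplit : ∫ s in r..(1:ℝ), h s = (∫ s in r..ε, h s) + A :=
    (intervalIntegral.integral_add_adjacent_intervals
      (hhII r ε hr0 hrε.le hε1) (hhII ε 1 hε0 hε1 le_rfl)).symm
  -- bound on ∫ s in r..ε, h s
  have hmid : |∫ s in r..ε, h s| ≤ K0 / (-(α + 2)) * r ^ (α + 2) := by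
    have hb : ∀ᵐ t ∂volume.restrict (Set.uIoc r ε), ‖h t‖ ≤ K0 * t ^ (α + 1) := by
      rw [Set.uIoc_of_le hrε.le]
      refine (ae_restrict_iff' measurableSet_Ioc).mpr (ae_of_all _ ?_)
      intro t ht
      exact hhb t (hr0.trans ht.1) ht.2
    have hg : IntervalIntegrable (fun t : ℝ => K0 * t ^ (α + 1)) volume r ε := by
      apply ContinuousOn.intervalIntegrable
      refine ContinuousOn.mul continuousOn_const ?_
      intro x hx
      rw [Set.uIcc_of_le hrε.le] at hx
      exact (Real.continuousAt_rpow_const x _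
        (Or.inl (ne_of_gt (lt_of_lt_of_le hr0 hx.1)))).continuousWithinAt
    have h4 := intervalIntegral.norm_integral_le_abs_of_norm_le hb hg
    have h5 : ∫ t in r..ε, K0 * t ^ (α + 1) = K0 * ((ε ^ (α + 2) - r ^ (α + 2)) / (α + 2)) := by
      rw [intervalIntegral.integral_const_mul, integral_rpow (Or.inr ⟨by linarith, by
        rw [Set.uIcc_of_le hrε.le]
        exact fun hc => absurd hc.1 (not_le.mpr hr0)⟩)]
      rw [show (α + 1 + 1 : ℝ) = α + 2 by ring]
    rw [h5] at h4
    have h6 : |K0 * ((ε ^ (α + 2) - r ^ (α + 2)) / (α + 2))|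
        = K0 * ((r ^ (α + 2) - ε ^ (α + 2)) / (-(α + 2))) := by
      rw [abs_mul, abs_of_pos hK0]
      congr 1
      rw [abs_div, abs_of_neg (show α + 2 < 0 from hα2),
        abs_of_nonpos (by linarith : ε ^ (α + 2) - r ^ (α + 2) ≤ 0)]
      ring_nf
    have h7 : K0 * ((r ^ (α + 2) - ε ^ (α + 2)) / (-(α + 2)))
        ≤ K0 / (-(α + 2)) * r ^ (α + 2) := by
      have hpos : (0:ℝ) < -(α + 2) := by linarith
      have h8 : (r ^ (α + 2) - ε ^ (α + 2)) / (-(α + 2))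
          ≤ r ^ (α + 2) / (-(α + 2)) := by
        gcongr
        linarith
      calc K0 * ((r ^ (α + 2) - ε ^ (α + 2)) / (-(α + 2)))
          ≤ K0 * (r ^ (α + 2) / (-(α + 2))) := mul_le_mul_of_nonneg_left h8 hK0.le
        _ = K0 / (-(α + 2)) * r ^ (α + 2) := by ring
    calc |∫ s in r..ε, h s| ≤ |K0 * ((ε ^ (α + 2) - r ^ (α + 2)) / (α + 2))| := h4
      _ = K0 * ((r ^ (α + 2) - ε ^ (α + 2)) / (-(α + 2))) := h6
      _ ≤ K0 / (-(α + 2)) * r ^ (α + 2) := h7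
  have hA : |A| ≤ |A| / ε ^ (α + 2) * r ^ (α + 2) := by
    rw [div_mul_eq_mul_div, le_div_iff₀ hεp]
    exact mul_le_mul_of_nonneg_left hεr (abs_nonneg A)
  have hgoal : ‖∫ s in (1:ℝ)..r, h s‖ ≤ |∫ s in r..ε, h s| + |A| := by
    rw [intervalIntegral.integral_symm, norm_neg, hsplit]
    exact (abs_add_le _ _).trans (by rfl)
  calc ‖∫ s in (1:ℝ)..r, h s‖ ≤ |∫ s in r..ε, h s| + |A| := hgoal
    _ ≤ K0 / (-(α + 2)) * r ^ (α + 2) + |A| / ε ^ (α + 2) * r ^ (α + 2) := by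
        linarith [hmid, hA]
    _ = (|A| / ε ^ (α + 2) + K0 / (-(α + 2))) * ‖r ^ (α + 2)‖ := by
        rw [Real.norm_eq_abs, abs_of_pos hrp]; ring
end

section
/- Hardy-type inequality for the logarithmically weighted dyadic norms: there is a constant C = C(N) such that for all radial functions v on ℝ^N vanishing at infinity, ‖v‖_{Z_{-2}} ≤ C ‖∂_r v‖_{Z_{-3}}, where ‖f‖_{Z_α} = sup_{R>0} (R^{-N/2-α}/⟨log R⟩) (∫_{R<|x|<2R} f² dx)^{1/2}. -/
open Real Filter Topology MeasureTheory


lemma one_le_S (x : ℝ) : 1 ≤ Real.sqrt (1 + x ^ 2) := by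
  have := Real.sqrt_le_sqrt (show (1:ℝ) ≤ 1 + x ^ 2 by nlinarith [sq_nonneg x])
  simpa using this

lemma S_shift (x c : ℝ) (hc : 0 ≤ c) :
    Real.sqrt (1 + (x + c) ^ 2) ≤ Real.sqrt (1 + x ^ 2) + c := by
  have hs := Real.sqrt_nonneg (1 + x ^ 2)
  have hsq : Real.sqrt (1 + x ^ 2) ^ 2 = 1 + x ^ 2 :=
    Real.sq_sqrt (by positivity)
  have hxs : x ≤ Real.sqrt (1 + x ^ 2) := by
    rcases le_or_gt x 0 with h | h
    · linarith
    · nlinarith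
  calc Real.sqrt (1 + (x + c) ^ 2) ≤ Real.sqrt ((Real.sqrt (1 + x ^ 2) + c) ^ 2) := by
        apply Real.sqrt_le_sqrt; nlinarith
    _ = Real.sqrt (1 + x ^ 2) + c := Real.sqrt_sq (by positivity)

/-- Cauchy–Schwarz for interval integrals of continuous nonnegative functions. -/
lemma csIneq {f g : ℝ → ℝ} {a b : ℝ} (hab : a ≤ b)
    (hf : ContinuousOn f (Set.Icc a b)) (hg : ContinuousOn g (Set.Icc a b))
    (hfn : ∀ x ∈ Set.Icc a b, 0 ≤ f x) (hgn : ∀ x ∈ Set.Icc a b, 0 ≤ g x) :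
    ∫ x in a..b, f x * g x ≤
      Real.sqrt (∫ x in a..b, f x ^ 2) * Real.sqrt (∫ x in a..b, g x ^ 2) := by
  set μ := volume.restrict (Set.Ioc a b) with hμ
  have hfin : IsFiniteMeasure μ := by
    constructor
    rw [hμ, Measure.restrict_apply MeasurableSet.univ, Set.univ_inter, Real.volume_Ioc]
    exact ENNReal.ofReal_lt_top
  have hconj : Real.HolderConjugate 2 2 := ⟨by norm_num, by norm_num, by norm_num⟩
  obtain ⟨Cf, hCf⟩ := (isCompact_Icc).exists_bound_of_continuousOn hf
  obtain ⟨Cg, hCg⟩ := (isCompact_Icc).exists_bound_of_continuousOn hg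
  have hsub : Set.Ioc a b ⊆ Set.Icc a b := Set.Ioc_subset_Icc_self
  have hmf : AEStronglyMeasurable f μ :=
    (hf.mono hsub).aestronglyMeasurable measurableSet_Ioc
  have hmg : AEStronglyMeasurable g μ :=
    (hg.mono hsub).aestronglyMeasurable measurableSet_Ioc
  have hef : MemLp f (ENNReal.ofReal 2) μ := by
    apply memLp_of_bounded (a := -Cf) (b := Cf) _ hmf
    filter_upwards [ae_restrict_mem measurableSet_Ioc] with x hx
    have := hCf x (hsub hx)
    have h' : |f x| ≤ Cf := by simpa using this
    exact ⟨neg_le_of_abs_le h', le_of_abs_le h'⟩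
  have heg : MemLp g (ENNReal.ofReal 2) μ := by
    apply memLp_of_bounded (a := -Cg) (b := Cg) _ hmg
    filter_upwards [ae_restrict_mem measurableSet_Ioc] with x hx
    have := hCg x (hsub hx)
    have h' : |g x| ≤ Cg := by simpa using this
    exact ⟨neg_le_of_abs_le h', le_of_abs_le h'⟩
  have hfa : 0 ≤ᵐ[μ] f := by
    filter_upwards [ae_restrict_mem measurableSet_Ioc] with x hx using hfn x (hsub hx)
  have hga : 0 ≤ᵐ[μ] g := by
    filter_upwards [ae_restrict_mem measurableSet_Ioc] with x hx using hgn x (hsub hx)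
  have key := MeasureTheory.integral_mul_le_Lp_mul_Lq_of_nonneg hconj hfa hga hef heg
  rw [intervalIntegral.integral_of_le hab, intervalIntegral.integral_of_le hab,
    intervalIntegral.integral_of_le hab]
  have e2 : ∀ h : ℝ → ℝ, (∀ x ∈ Set.Icc a b, 0 ≤ h x) →
      ∫ x, h x ^ (2:ℝ) ∂μ = ∫ x in Set.Ioc a b, h x ^ 2 := by
    intro h hh
    rw [hμ]
    apply setIntegral_congr_fun measurableSet_Ioc
    intro x hx
    have : h x ^ (2:ℝ) = h x ^ (2:ℕ) := by
      rw [← Real.rpow_natCast]; norm_num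
    simpa using this
  have := key
  rw [e2 f hfn, e2 g hgn] at this
  calc ∫ x in Set.Ioc a b, f x * g x = ∫ x, f x * g x ∂μ := rfl
    _ ≤ (∫ x in Set.Ioc a b, f x ^ 2) ^ (1/(2:ℝ)) * (∫ x in Set.Ioc a b, g x ^ 2) ^ (1/(2:ℝ)) := this
    _ = Real.sqrt (∫ x in Set.Ioc a b, f x ^ 2) * Real.sqrt (∫ x in Set.Ioc a b, g x ^ 2) := by
        rw [Real.sqrt_eq_rpow, Real.sqrt_eq_rpow]

lemma geomSum (n : ℕ) : ∑ k ∈ Finset.range n, (1 + (k:ℝ)) * (1/4 : ℝ) ^ k ≤ 2 := by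
  have h1 : HasSum (fun k : ℕ => ((1:ℝ)/4) ^ k) (1 - 1/4)⁻¹ :=
    hasSum_geometric_of_lt_one (by norm_num) (by norm_num)
  have h2 : HasSum (fun k : ℕ => (k:ℝ) * (1/4) ^ k) ((1/4) / (1 - 1/4) ^ 2) :=
    hasSum_coe_mul_geometric_of_norm_lt_one (by rw [Real.norm_eq_abs, abs_of_nonneg (by norm_num : (0:ℝ) ≤ 1/4)]; norm_num)
  have h3 : HasSum (fun k : ℕ => (1 + (k:ℝ)) * (1/4 : ℝ) ^ k)
      ((1 - 1/4)⁻¹ + (1/4) / (1 - 1/4) ^ 2) := by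
    have := h1.add h2
    convert this using 2 with k
    ring
  have h4 := Summable.sum_le_tsum (Finset.range n)
    (fun k _ => by positivity) h3.summable
  rw [h3.tsum_eq] at h4
  calc ∑ k ∈ Finset.range n, (1 + (k:ℝ)) * (1/4 : ℝ) ^ k
      ≤ (1 - 1/4)⁻¹ + (1/4) / (1 - 1/4) ^ 2 := h4
    _ ≤ 2 := by norm_num

lemma pow_rpow_neg_two (k : ℕ) : ((2:ℝ)^k)^(-2:ℝ) = (1/4:ℝ)^k := by
  rw [show (-2:ℝ) = ((-2:ℤ):ℝ) by norm_num, Real.rpow_intCast]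
  rw [show ((-2:ℤ)) = -(2:ℤ) by ring, zpow_neg, one_div, inv_pow]
  congr 1
  rw [show ((2:ℤ)) = ((2:ℕ):ℤ) by norm_num, zpow_natCast, ← pow_mul,
    show (4:ℝ) = 2^2 by norm_num, ← pow_mul, mul_comm]

lemma S_dyadic (a : ℝ) (ha : 0 < a) (k : ℕ) :
    Real.sqrt (1 + Real.log (2 ^ k * a) ^ 2)
      ≤ (1 + (k:ℝ)) * Real.sqrt (1 + Real.log a ^ 2) := by
  have hlog : Real.log (2 ^ k * a) = Real.log a + (k:ℝ) * Real.log 2 := by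
    rw [Real.log_mul (by positivity) (ne_of_gt ha), Real.log_pow]
    ring
  have hc : (0:ℝ) ≤ (k:ℝ) * Real.log 2 := by
    apply mul_nonneg (Nat.cast_nonneg k)
    exact Real.log_nonneg (by norm_num)
  have h1 : Real.sqrt (1 + Real.log (2 ^ k * a) ^ 2)
      ≤ Real.sqrt (1 + Real.log a ^ 2) + (k:ℝ) * Real.log 2 := by
    rw [hlog]; exact S_shift _ _ hc
  have h2 : Real.log 2 ≤ 1 := by
    have := Real.log_le_sub_one_of_pos (by norm_num : (0:ℝ) < 2)
    linarith
  have h3 : (1:ℝ) ≤ Real.sqrt (1 + Real.log a ^ 2) := one_le_S _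
  have hk : (0:ℝ) ≤ (k:ℝ) := Nat.cast_nonneg k
  nlinarith [mul_le_mul_of_nonneg_left h2 hk]

lemma sumBound (M : ℝ) (hM0 : 0 ≤ M) {a : ℝ} (ha : 0 < a) (n : ℕ) :
    ∑ k ∈ Finset.range n,
        M * Real.sqrt (1 + Real.log (2 ^ k * a) ^ 2) * (2 ^ k * a) ^ (-2 : ℝ)
      ≤ 2 * M * Real.sqrt (1 + Real.log a ^ 2) * a ^ (-2 : ℝ) := by
  set c : ℝ := M * Real.sqrt (1 + Real.log a ^ 2) * a ^ (-2 : ℝ) with hc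
  have hc0 : 0 ≤ c := by positivity
  have hterm : ∀ k ∈ Finset.range n,
      M * Real.sqrt (1 + Real.log (2 ^ k * a) ^ 2) * (2 ^ k * a) ^ (-2 : ℝ)
        ≤ (1 + (k:ℝ)) * (1/4 : ℝ) ^ k * c := by
    intro k _
    have hsplit : ((2:ℝ) ^ k * a) ^ (-2 : ℝ) = (1/4:ℝ)^k * a ^ (-2:ℝ) := by
      rw [Real.mul_rpow (by positivity) ha.le, pow_rpow_neg_two]
    rw [hsplit, hc]
    have hS := S_dyadic a ha k
    have h1 : (0:ℝ) ≤ (1/4:ℝ)^k * a ^ (-2:ℝ) := by positivity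
    have h2 : (0:ℝ) ≤ M * Real.sqrt (1 + Real.log (2^k*a) ^ 2) := by positivity
    calc M * Real.sqrt (1 + Real.log (2 ^ k * a) ^ 2) * ((1/4:ℝ)^k * a ^ (-2:ℝ))
        ≤ M * ((1 + (k:ℝ)) * Real.sqrt (1 + Real.log a ^ 2)) * ((1/4:ℝ)^k * a ^ (-2:ℝ)) := by
          apply mul_le_mul_of_nonneg_right _ h1
          exact mul_le_mul_of_nonneg_left hS hM0
      _ = (1 + (k:ℝ)) * (1/4 : ℝ) ^ k * (M * Real.sqrt (1 + Real.log a ^ 2) * a ^ (-2 : ℝ)) := by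
          ring
  calc ∑ k ∈ Finset.range n,
        M * Real.sqrt (1 + Real.log (2 ^ k * a) ^ 2) * (2 ^ k * a) ^ (-2 : ℝ)
      ≤ ∑ k ∈ Finset.range n, (1 + (k:ℝ)) * (1/4 : ℝ) ^ k * c := Finset.sum_le_sum hterm
    _ = (∑ k ∈ Finset.range n, (1 + (k:ℝ)) * (1/4 : ℝ) ^ k) * c := by
        rw [Finset.sum_mul]
    _ ≤ 2 * c := mul_le_mul_of_nonneg_right (geomSum n) hc0
    _ = 2 * M * Real.sqrt (1 + Real.log a ^ 2) * a ^ (-2 : ℝ) := by rw [hc]; ring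

lemma stepBound (N : ℕ) (hN : 3 ≤ N) (v : ℝ → ℝ) (hv : ContDiffOn ℝ 1 v (Set.Ioi 0))
    (M : ℝ) (hM0 : 0 ≤ M)
    (hM : ∀ ρ : ℝ, 0 < ρ →
      ρ ^ (-(N : ℝ) / 2 + 3) / Real.sqrt (1 + Real.log ρ ^ 2) *
        Real.sqrt (∫ r in ρ..2 * ρ, deriv v r ^ 2 * r ^ ((N : ℝ) - 1)) ≤ M)
    {a : ℝ} (ha : 0 < a) :
    |v (2 * a) - v a| ≤ M * Real.sqrt (1 + Real.log a ^ 2) * a ^ (-2 : ℝ) := by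
  have hab : a ≤ 2 * a := by linarith
  have hsub : Set.Icc a (2 * a) ⊆ Set.Ioi 0 := fun x hx => lt_of_lt_of_le ha hx.1
  have huIcc : Set.uIcc a (2 * a) = Set.Icc a (2 * a) := Set.uIcc_of_le hab
  have hdc : ContinuousOn (deriv v) (Set.Ioi 0) :=
    hv.continuousOn_deriv_of_isOpen isOpen_Ioi le_rfl
  have hdc' : ContinuousOn (deriv v) (Set.Icc a (2 * a)) := hdc.mono hsub
  -- FTC
  have hftc : ∫ x in a..2 * a, deriv v x = v (2 * a) - v a := by
    apply intervalIntegral.integral_eq_sub_of_hasDerivAt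
    · intro x hx
      rw [huIcc] at hx
      have hx0 : x ∈ Set.Ioi 0 := hsub hx
      exact ((hv.differentiableOn one_ne_zero).differentiableAt
        (Ioi_mem_nhds hx0)).hasDerivAt
    · exact (hdc'.mono (by rw [huIcc])).intervalIntegrable
  -- pointwise factorization
  set e : ℝ := ((N : ℝ) - 1) / 2 with he
  have hfg : ∀ x ∈ Set.Icc a (2 * a),
      |deriv v x| = (|deriv v x| * x ^ e) * x ^ (-e) := by
    intro x hx
    have hx0 : (0 : ℝ) < x := lt_of_lt_of_le ha hx.1
    rw [mul_assoc, ← Real.rpow_add hx0]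
    simp
  have habs : |v (2 * a) - v a| ≤ ∫ x in a..2 * a, |deriv v x| := by
    rw [← hftc]
    exact intervalIntegral.abs_integral_le_integral_abs hab
  have hcongr : (∫ x in a..2 * a, |deriv v x|)
      = ∫ x in a..2 * a, (|deriv v x| * x ^ e) * x ^ (-e) := by
    apply intervalIntegral.integral_congr
    intro x hx
    rw [huIcc] at hx
    exact hfg x hx
  -- continuity facts
  have hcf : ContinuousOn (fun x : ℝ => |deriv v x| * x ^ e) (Set.Icc a (2 * a)) := by
    apply (hdc'.abs).mul
    apply ContinuousOn.rpow_const continuousOn_id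
    intro x hx
    exact Or.inl (ne_of_gt (lt_of_lt_of_le ha hx.1))
  have hcg : ContinuousOn (fun x : ℝ => x ^ (-e)) (Set.Icc a (2 * a)) := by
    apply ContinuousOn.rpow_const continuousOn_id
    intro x hx
    exact Or.inl (ne_of_gt (lt_of_lt_of_le ha hx.1))
  have hcs := csIneq hab hcf hcg
    (fun x hx => mul_nonneg (abs_nonneg _) (Real.rpow_nonneg (le_of_lt (lt_of_lt_of_le ha hx.1)) _))
    (fun x hx => Real.rpow_nonneg (le_of_lt (lt_of_lt_of_le ha hx.1)) _)
  -- identify ∫ f²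
  have hif : (∫ x in a..2 * a, (|deriv v x| * x ^ e) ^ 2)
      = ∫ x in a..2 * a, deriv v x ^ 2 * x ^ ((N : ℝ) - 1) := by
    apply intervalIntegral.integral_congr
    intro x hx
    rw [huIcc] at hx
    have hx0 : (0 : ℝ) < x := lt_of_lt_of_le ha hx.1
    show (|deriv v x| * x ^ e) ^ 2 = deriv v x ^ 2 * x ^ ((N : ℝ) - 1)
    have hee : e + e = (N : ℝ) - 1 := by rw [he]; ring
    rw [mul_pow, sq_abs, sq (x ^ e), ← Real.rpow_add hx0, hee]
  -- bound sqrt ∫ f² by hM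
  have hL : (0:ℝ) < Real.sqrt (1 + Real.log a ^ 2) := by positivity
  have hSf : Real.sqrt (∫ x in a..2 * a, (|deriv v x| * x ^ e) ^ 2)
      ≤ M * Real.sqrt (1 + Real.log a ^ 2) * a ^ ((N : ℝ) / 2 - 3) := by
    rw [hif]
    have h1 := hM a ha
    have hP : (0:ℝ) < a ^ (-(N : ℝ) / 2 + 3) / Real.sqrt (1 + Real.log a ^ 2) := by
      positivity
    set S := Real.sqrt (∫ x in a..2 * a, deriv v x ^ 2 * x ^ ((N : ℝ) - 1)) with hS
    set L := Real.sqrt (1 + Real.log a ^ 2) with hLd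
    have hap : (0:ℝ) < a ^ (-(N : ℝ) / 2 + 3) := Real.rpow_pos_of_pos ha _
    have hq : a ^ ((N : ℝ) / 2 - 3) = (a ^ (-(N : ℝ) / 2 + 3))⁻¹ := by
      rw [← Real.rpow_neg ha.le]
      congr 1; ring
    have h1' : a ^ (-(N : ℝ) / 2 + 3) * S ≤ M * L := by
      have := mul_le_mul_of_nonneg_right h1 hL.le
      calc a ^ (-(N : ℝ) / 2 + 3) * S
          = a ^ (-(N : ℝ) / 2 + 3) / L * S * L := by field_simp
        _ ≤ M * L := this
    have h2 : S ≤ M * L / a ^ (-(N : ℝ) / 2 + 3) := by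
      rw [le_div_iff₀ hap, mul_comm]
      exact h1'
    calc S ≤ M * L / a ^ (-(N : ℝ) / 2 + 3) := h2
      _ = M * L * a ^ ((N : ℝ) / 2 - 3) := by rw [hq, div_eq_mul_inv]
  -- bound sqrt ∫ g²
  have hN3 : (3:ℝ) ≤ (N : ℝ) := by exact_mod_cast hN
  have hig : (∫ x in a..2 * a, (x ^ (-e)) ^ 2) ≤ a ^ (1 - (N : ℝ)) * a := by
    have hcongr2 : (∫ x in a..2 * a, (x ^ (-e)) ^ 2)
        = ∫ x in a..2 * a, x ^ (1 - (N : ℝ)) := by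
      apply intervalIntegral.integral_congr
      intro x hx
      rw [huIcc] at hx
      have hx0 : (0 : ℝ) < x := lt_of_lt_of_le ha hx.1
      show (x ^ (-e)) ^ 2 = x ^ (1 - (N : ℝ))
      have hee : -e + -e = 1 - (N : ℝ) := by rw [he]; ring
      rw [sq (x ^ (-e)), ← Real.rpow_add hx0, hee]
    rw [hcongr2]
    have hmono : ∫ x in a..2 * a, x ^ (1 - (N : ℝ))
        ≤ ∫ x in a..2 * a, a ^ (1 - (N : ℝ)) := by
      apply intervalIntegral.integral_mono_on hab
      · apply ContinuousOn.intervalIntegrable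
        rw [huIcc]
        apply ContinuousOn.rpow_const continuousOn_id
        intro x hx
        exact Or.inl (ne_of_gt (lt_of_lt_of_le ha hx.1))
      · exact intervalIntegrable_const
      · intro x hx
        exact Real.rpow_le_rpow_of_nonpos ha hx.1 (by linarith)
    calc ∫ x in a..2 * a, x ^ (1 - (N : ℝ)) ≤ ∫ x in a..2 * a, a ^ (1 - (N : ℝ)) := hmono
      _ = a ^ (1 - (N : ℝ)) * a := by
          rw [intervalIntegral.integral_const]
          rw [smul_eq_mul]
          ring
  have hSg : Real.sqrt (∫ x in a..2 * a, (x ^ (-e)) ^ 2) ≤ a ^ ((2 - (N : ℝ)) / 2) := by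
    have h3 : a ^ (1 - (N : ℝ)) * a = a ^ (2 - (N : ℝ)) := by
      nth_rewrite 2 [show a = a ^ (1:ℝ) from (Real.rpow_one a).symm]
      rw [← Real.rpow_add ha]
      congr 1; ring
    calc Real.sqrt (∫ x in a..2 * a, (x ^ (-e)) ^ 2)
        ≤ Real.sqrt (a ^ (2 - (N : ℝ))) := by
          apply Real.sqrt_le_sqrt
          rw [← h3]; exact hig
      _ = a ^ ((2 - (N : ℝ)) / 2) := by
          rw [Real.sqrt_eq_rpow, ← Real.rpow_mul ha.le]
          congr 1; ring
  -- combine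
  have hB1 : (0:ℝ) ≤ M * Real.sqrt (1 + Real.log a ^ 2) * a ^ ((N : ℝ) / 2 - 3) := by
    positivity
  calc |v (2 * a) - v a| ≤ ∫ x in a..2 * a, |deriv v x| := habs
    _ = ∫ x in a..2 * a, (|deriv v x| * x ^ e) * x ^ (-e) := hcongr
    _ ≤ Real.sqrt (∫ x in a..2 * a, (|deriv v x| * x ^ e) ^ 2) *
        Real.sqrt (∫ x in a..2 * a, (x ^ (-e)) ^ 2) := hcs
    _ ≤ (M * Real.sqrt (1 + Real.log a ^ 2) * a ^ ((N : ℝ) / 2 - 3)) *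
        a ^ ((2 - (N : ℝ)) / 2) :=
          mul_le_mul hSf hSg (Real.sqrt_nonneg _) hB1
    _ = M * Real.sqrt (1 + Real.log a ^ 2) * a ^ (-2 : ℝ) := by
        rw [mul_assoc (M * Real.sqrt (1 + Real.log a ^ 2)), ← Real.rpow_add ha,
          show (N:ℝ)/2 - 3 + (2 - (N:ℝ))/2 = -2 by ring]

lemma pointBound (N : ℕ) (hN : 3 ≤ N) (v : ℝ → ℝ) (hv : ContDiffOn ℝ 1 v (Set.Ioi 0))
    (hv0 : Tendsto v atTop (𝓝 0))
    (M : ℝ) (hM0 : 0 ≤ M)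
    (hM : ∀ ρ : ℝ, 0 < ρ →
      ρ ^ (-(N : ℝ) / 2 + 3) / Real.sqrt (1 + Real.log ρ ^ 2) *
        Real.sqrt (∫ r in ρ..2 * ρ, deriv v r ^ 2 * r ^ ((N : ℝ) - 1)) ≤ M)
    {a : ℝ} (ha : 0 < a) :
    |v a| ≤ 2 * M * Real.sqrt (1 + Real.log a ^ 2) * a ^ (-2 : ℝ) := by
  set B : ℝ := 2 * M * Real.sqrt (1 + Real.log a ^ 2) * a ^ (-2 : ℝ) with hB
  have hbound : ∀ n : ℕ, |v a| ≤ |v (2 ^ n * a)| + B := by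
    intro n
    have htel : ∑ k ∈ Finset.range n, (v (2 ^ (k+1) * a) - v (2 ^ k * a))
        = v (2 ^ n * a) - v (2 ^ 0 * a) :=
      Finset.sum_range_sub (fun k => v (2 ^ k * a)) n
    have hterm : ∀ k ∈ Finset.range n,
        |v (2 ^ (k+1) * a) - v (2 ^ k * a)|
          ≤ M * Real.sqrt (1 + Real.log (2 ^ k * a) ^ 2) * (2 ^ k * a) ^ (-2 : ℝ) := by
      intro k _
      have hpos : (0:ℝ) < 2 ^ k * a := by positivity
      have := stepBound N hN v hv M hM0 hM hpos
      rwa [show 2 * (2 ^ k * a) = 2 ^ (k+1) * a by ring] at this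
    have hsum : |∑ k ∈ Finset.range n, (v (2 ^ (k+1) * a) - v (2 ^ k * a))| ≤ B :=
      le_trans (Finset.abs_sum_le_sum_abs _ _)
        (le_trans (Finset.sum_le_sum hterm) (sumBound M hM0 ha n))
    rw [htel] at hsum
    have h0 : (2:ℝ) ^ 0 * a = a := by norm_num
    rw [h0] at hsum
    calc |v a| ≤ |v (2 ^ n * a)| + |v (2 ^ n * a) - v a| := by
          have := abs_sub_abs_le_abs_sub (v a) (v (2 ^ n * a))
          have h := abs_sub_comm (v a) (v (2 ^ n * a))
          linarith [abs_add_le (v (2 ^ n * a)) (v a - v (2 ^ n * a)), abs_sub_comm (v (2^n*a)) (v a)]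
      _ ≤ |v (2 ^ n * a)| + B := by linarith
  have htend : Tendsto (fun n : ℕ => |v (2 ^ n * a)| + B) atTop (𝓝 (0 + B)) := by
    apply Tendsto.add _ tendsto_const_nhds
    have h2 : Tendsto (fun n : ℕ => (2:ℝ) ^ n * a) atTop atTop :=
      Tendsto.atTop_mul_const ha (tendsto_pow_atTop_atTop_of_one_lt (by norm_num : (1:ℝ) < 2))
    have := (hv0.comp h2).abs
    simpa using this
  have := ge_of_tendsto' htend hbound
  rw [zero_add] at this
  exact this

/-- Hardy-type inequality for the logarithmically weighted dyadic norms: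
`‖v‖_{Z_{-2}} ≤ C ‖∂_r v‖_{Z_{-3}}` for radial `v` vanishing at infinity.  The norms are
expressed through their defining dyadic bounds (for a radial profile, with weight
`r^{N-1}`). -/
theorem stmt14 (N : ℕ) (hN : 3 ≤ N) :
    ∃ C : ℝ, 0 < C ∧
      ∀ v : ℝ → ℝ, ContDiffOn ℝ 1 v (Set.Ioi 0) →
        Tendsto v atTop (𝓝 0) →
        ∀ M : ℝ,
          (∀ ρ : ℝ, 0 < ρ →
            ρ ^ (-(N : ℝ) / 2 + 3) / Real.sqrt (1 + Real.log ρ ^ 2) *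
              Real.sqrt (∫ r in ρ..2 * ρ, deriv v r ^ 2 * r ^ ((N : ℝ) - 1)) ≤ M) →
          ∀ R : ℝ, 0 < R →
            R ^ (-(N : ℝ) / 2 + 2) / Real.sqrt (1 + Real.log R ^ 2) *
              Real.sqrt (∫ r in R..2 * R, v r ^ 2 * r ^ ((N : ℝ) - 1)) ≤ C * M := by
  set q : ℝ := ((N : ℝ) - 1) / 2 with hq
  refine ⟨4 * (2:ℝ) ^ q, by positivity, ?_⟩
  intro v hv hv0 M hM R hR
  have hN3 : (3:ℝ) ≤ (N : ℝ) := by exact_mod_cast hN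
  have hM0 : 0 ≤ M := le_trans (by positivity) (hM 1 one_pos)
  set L : ℝ := Real.sqrt (1 + Real.log R ^ 2) with hL
  have hL1 : (1:ℝ) ≤ L := one_le_S _
  have hL0 : (0:ℝ) < L := lt_of_lt_of_le one_pos hL1
  set B : ℝ := 4 * M * L * R ^ (-2 : ℝ) with hB
  have hB0 : (0:ℝ) ≤ B := by positivity
  have hab : R ≤ 2 * R := by linarith
  have huIcc : Set.uIcc R (2 * R) = Set.Icc R (2 * R) := Set.uIcc_of_le hab
  -- pointwise bound
  have hpt : ∀ r ∈ Set.Icc R (2 * R),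
      v r ^ 2 * r ^ ((N : ℝ) - 1) ≤ B ^ 2 * (2 * R) ^ ((N : ℝ) - 1) := by
    intro r hr
    have hr0 : (0:ℝ) < r := lt_of_lt_of_le hR hr.1
    -- ⟨log r⟩ ≤ 2 L
    have hLr : Real.sqrt (1 + Real.log r ^ 2) ≤ 2 * L := by
      set c : ℝ := Real.log r - Real.log R with hcd
      have hc0 : 0 ≤ c := by
        have := Real.log_le_log hR hr.1
        simp [hcd]; linarith
      have hc1 : c ≤ 1 := by
        have h2 : Real.log r ≤ Real.log (2 * R) := Real.log_le_log hr0 hr.2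
        rw [Real.log_mul (by norm_num) (ne_of_gt hR)] at h2
        have hlog2 : Real.log 2 ≤ 1 := by
          have := Real.log_le_sub_one_of_pos (by norm_num : (0:ℝ) < 2)
          linarith
        simp [hcd]; linarith
      have he : Real.log r = Real.log R + c := by rw [hcd]; ring
      calc Real.sqrt (1 + Real.log r ^ 2) = Real.sqrt (1 + (Real.log R + c) ^ 2) := by rw [he]
        _ ≤ L + c := S_shift _ _ hc0
        _ ≤ 2 * L := by linarith
    have hvb : |v r| ≤ B := by
      have h1 := pointBound N hN v hv hv0 M hM0 hM hr0
      have h2 : r ^ (-2:ℝ) ≤ R ^ (-2:ℝ) :=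
        Real.rpow_le_rpow_of_nonpos hR hr.1 (by norm_num)
      calc |v r| ≤ 2 * M * Real.sqrt (1 + Real.log r ^ 2) * r ^ (-2 : ℝ) := h1
        _ ≤ 2 * M * (2 * L) * R ^ (-2 : ℝ) := by
            have hx : Real.sqrt (1 + Real.log r ^ 2) * r ^ (-2:ℝ) ≤ (2*L) * R ^ (-2:ℝ) :=
              mul_le_mul hLr h2 (by positivity) (by positivity)
            calc 2 * M * Real.sqrt (1 + Real.log r ^ 2) * r ^ (-2 : ℝ)
                = 2 * M * (Real.sqrt (1 + Real.log r ^ 2) * r ^ (-2:ℝ)) := by ring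
              _ ≤ 2 * M * ((2*L) * R ^ (-2:ℝ)) :=
                  mul_le_mul_of_nonneg_left hx (by positivity)
              _ = 2 * M * (2 * L) * R ^ (-2 : ℝ) := by ring
        _ = B := by rw [hB]; ring
    have hv2 : v r ^ 2 ≤ B ^ 2 := by
      rw [← sq_abs]
      exact pow_le_pow_left₀ (abs_nonneg _) hvb 2
    have hrp : r ^ ((N : ℝ) - 1) ≤ (2 * R) ^ ((N : ℝ) - 1) :=
      Real.rpow_le_rpow hr0.le hr.2 (by linarith)
    exact mul_le_mul hv2 hrp (by positivity) (by positivity)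
  -- integral bound
  have hint : (∫ r in R..2 * R, v r ^ 2 * r ^ ((N : ℝ) - 1))
      ≤ B ^ 2 * (2 * R) ^ ((N : ℝ) - 1) * R := by
    have hmono : (∫ r in R..2 * R, v r ^ 2 * r ^ ((N : ℝ) - 1))
        ≤ ∫ _r in R..2 * R, B ^ 2 * (2 * R) ^ ((N : ℝ) - 1) := by
      apply intervalIntegral.integral_mono_on hab _ intervalIntegrable_const hpt
      · apply ContinuousOn.intervalIntegrable
        rw [huIcc]
        apply ContinuousOn.mul
        · exact ((hv.continuousOn).mono
            (fun x hx => lt_of_lt_of_le hR hx.1 : Set.Icc R (2*R) ⊆ Set.Ioi 0)).pow 2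
        · apply ContinuousOn.rpow_const continuousOn_id
          intro x hx
          exact Or.inl (ne_of_gt (lt_of_lt_of_le hR hx.1))
    rw [intervalIntegral.integral_const, smul_eq_mul] at hmono
    calc (∫ r in R..2 * R, v r ^ 2 * r ^ ((N : ℝ) - 1))
        ≤ (2 * R - R) * (B ^ 2 * (2 * R) ^ ((N : ℝ) - 1)) := hmono
      _ = B ^ 2 * (2 * R) ^ ((N : ℝ) - 1) * R := by ring
  -- sqrt bound
  have hsqrt : Real.sqrt (∫ r in R..2 * R, v r ^ 2 * r ^ ((N : ℝ) - 1))
      ≤ B * ((2:ℝ) ^ q * R ^ q) * R ^ ((1:ℝ)/2) := by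
    have h2R : (0:ℝ) < 2 * R := by linarith
    have heq : Real.sqrt (B ^ 2 * (2 * R) ^ ((N : ℝ) - 1) * R)
        = B * ((2:ℝ) ^ q * R ^ q) * R ^ ((1:ℝ)/2) := by
      rw [Real.sqrt_mul (by positivity) R, Real.sqrt_mul (sq_nonneg B),
        Real.sqrt_sq hB0]
      congr 1
      · congr 1
        rw [Real.sqrt_eq_rpow, ← Real.rpow_mul h2R.le,
          show ((N:ℝ) - 1) * (1/2) = q by rw [hq]; ring,
          Real.mul_rpow (by norm_num : (0:ℝ) ≤ 2) hR.le]
      · rw [Real.sqrt_eq_rpow]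
    rw [← heq]
    exact Real.sqrt_le_sqrt hint
  -- final computation
  have hcoef : (0:ℝ) ≤ R ^ (-(N : ℝ) / 2 + 2) / L := by positivity
  have hexp : R ^ (-(N : ℝ) / 2 + 2) * R ^ (-2:ℝ) * R ^ q * R ^ ((1:ℝ)/2) = 1 := by
    rw [← Real.rpow_add hR, ← Real.rpow_add hR, ← Real.rpow_add hR,
      show -(N : ℝ) / 2 + 2 + -2 + q + 1/2 = 0 by rw [hq]; ring, Real.rpow_zero]
  calc R ^ (-(N : ℝ) / 2 + 2) / L *
        Real.sqrt (∫ r in R..2 * R, v r ^ 2 * r ^ ((N : ℝ) - 1))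
      ≤ R ^ (-(N : ℝ) / 2 + 2) / L * (B * ((2:ℝ) ^ q * R ^ q) * R ^ ((1:ℝ)/2)) :=
        mul_le_mul_of_nonneg_left hsqrt hcoef
    _ = 4 * (2:ℝ) ^ q * M *
        ((R ^ (-(N : ℝ) / 2 + 2) * R ^ (-2:ℝ) * R ^ q * R ^ ((1:ℝ)/2)) * (L / L)) := by
        rw [hB]; ring
    _ = 4 * (2:ℝ) ^ q * M := by
        rw [hexp, div_self (ne_of_gt hL0)]; ring
end

section
/- Suppose V : ℝ^N → ℝ satisfies |V(x)| ≤ C(1+|x|)^{-4} with N ≥ 7. Then V belongs to L²_t L^{2N/3}_x of any exterior cone region: ∫_ℝ (∫_{|x| ≥ R+|t|} |V(x)|^{2N/3} dx)^{3/(2N) · 2} dt < ∞ for every R > 0, and moreover the norm ‖1_{\{|x| ≥ R+|t|\}} V‖_{L²_t L^{2N/3}_x} tends to 0 as R → ∞. -/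
open Real MeasureTheory Filter Topology

/-- A potential with decay `|V(x)| ≤ C(1+|x|)^{-4}` in dimension `N ≥ 7` lies in
`L²_t L^{2N/3}_x` of every exterior cone `{|x| ≥ R + |t|}`, and the corresponding norm
tends to `0` as `R → ∞`. -/
theorem stmt19 (N : ℕ) (hN : 7 ≤ N) (V : EuclideanSpace ℝ (Fin N) → ℝ)
    (hVm : Measurable V) (C : ℝ)
    (hV : ∀ x, |V x| ≤ C * (1 + ‖x‖) ^ (-4 : ℝ)) :
    (∀ R : ℝ, 0 < R →
      Integrable (fun t : ℝ =>
        (∫ x in {x : EuclideanSpace ℝ (Fin N) | R + |t| ≤ ‖x‖},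
            |V x| ^ (2 * (N : ℝ) / 3)) ^ (3 / (2 * (N : ℝ)) * 2))) ∧
    Tendsto (fun R : ℝ =>
        Real.sqrt (∫ t : ℝ,
          (∫ x in {x : EuclideanSpace ℝ (Fin N) | R + |t| ≤ ‖x‖},
              |V x| ^ (2 * (N : ℝ) / 3)) ^ (3 / (2 * (N : ℝ)) * 2)))
      atTop (𝓝 0) := by
  have hNpos : (0:ℝ) < N := by
    have : (7:ℝ) ≤ N := by exact_mod_cast hN
    linarith
  set q : ℝ := 2 * (N:ℝ) / 3 with hq_def
  set e : ℝ := 3 / (2 * (N:ℝ)) * 2 with he_def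
  have hq : 0 < q := by positivity
  have he : 0 < e := by positivity
  have hC : 0 ≤ C := by
    have h0 := hV 0
    simp [Real.one_rpow] at h0
    exact le_trans (abs_nonneg _) h0
  set h : EuclideanSpace ℝ (Fin N) → ℝ := fun x => |V x| ^ q with hh_def
  have hhm : Measurable h := by fun_prop
  have hh0 : ∀ x, 0 ≤ h x := fun x => Real.rpow_nonneg (abs_nonneg _) q
  have hbase : ∀ x : EuclideanSpace ℝ (Fin N), (0:ℝ) < 1 + ‖x‖ := fun x => by positivity
  -- pointwise bound for h
  have hhle : ∀ x, h x ≤ C ^ q * (1 + ‖x‖) ^ (-(4 * q)) := by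
    intro x
    have h1 : h x ≤ (C * (1 + ‖x‖) ^ (-4:ℝ)) ^ q :=
      Real.rpow_le_rpow (abs_nonneg _) (hV x) hq.le
    have h2 : (C * (1 + ‖x‖) ^ (-4:ℝ)) ^ q
        = C ^ q * (1 + ‖x‖) ^ (-(4 * q)) := by
      rw [Real.mul_rpow hC (Real.rpow_nonneg (hbase x).le _),
        ← Real.rpow_mul (hbase x).le]
      ring_nf
    exact h2 ▸ h1
  -- integrability of the dominating functions
  have hfr : (Module.finrank ℝ (EuclideanSpace ℝ (Fin N)) : ℝ) = (N : ℝ) := by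
    rw [finrank_euclideanSpace_fin]
  have hW : Integrable (fun x : EuclideanSpace ℝ (Fin N) => (1 + ‖x‖) ^ (-(4 * q))) := by
    apply integrable_one_add_norm (E := EuclideanSpace ℝ (Fin N))
    rw [hfr, hq_def]; linarith
  have hI_int : Integrable (fun x : EuclideanSpace ℝ (Fin N) => (1 + ‖x‖) ^ (-(2 * (N:ℝ)))) := by
    apply integrable_one_add_norm (E := EuclideanSpace ℝ (Fin N))
    rw [hfr]; linarith
  set I : ℝ := ∫ x : EuclideanSpace ℝ (Fin N), (1 + ‖x‖) ^ (-(2 * (N:ℝ))) with hI_def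
  have hI0 : 0 ≤ I := integral_nonneg fun x => Real.rpow_nonneg (hbase x).le _
  have hh_int : Integrable h := by
    refine (hW.const_mul (C ^ q)).mono' hhm.aestronglyMeasurable ?_
    filter_upwards with x
    rw [Real.norm_eq_abs, abs_of_nonneg (hh0 x)]
    exact hhle x
  -- the tail estimate
  have hSm : ∀ r : ℝ, MeasurableSet {x : EuclideanSpace ℝ (Fin N) | r ≤ ‖x‖} := by
    intro r
    exact measurableSet_le measurable_const (by fun_prop)
  have key : ∀ r : ℝ, 0 ≤ r →
      (∫ x in {x : EuclideanSpace ℝ (Fin N) | r ≤ ‖x‖}, h x)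
        ≤ (C ^ q * I) * (1 + r) ^ (-(2 * (N:ℝ) / 3)) := by
    intro r hr
    have hr1 : (0:ℝ) < 1 + r := by linarith
    have step1 : (∫ x in {x : EuclideanSpace ℝ (Fin N) | r ≤ ‖x‖}, h x)
        ≤ ∫ x in {x : EuclideanSpace ℝ (Fin N) | r ≤ ‖x‖},
            (C ^ q * (1 + r) ^ (-(2 * (N:ℝ) / 3))) * (1 + ‖x‖) ^ (-(2 * (N:ℝ))) := by
      refine setIntegral_mono_on hh_int.integrableOn
        (((hI_int.const_mul _).integrableOn)) (hSm r) ?_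
      intro x hx
      have hx' : r ≤ ‖x‖ := hx
      have e1 : (1 + ‖x‖ : ℝ) ^ (-(4 * q))
          = (1 + ‖x‖) ^ (-(2 * (N:ℝ) / 3)) * (1 + ‖x‖) ^ (-(2 * (N:ℝ))) := by
        rw [← Real.rpow_add (hbase x)]
        congr 1
        rw [hq_def]; ring
      have e2 : (1 + ‖x‖ : ℝ) ^ (-(2 * (N:ℝ) / 3)) ≤ (1 + r) ^ (-(2 * (N:ℝ) / 3)) := by
        apply Real.rpow_le_rpow_of_nonpos hr1 (by linarith) (neg_nonpos.mpr (by positivity))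
      calc h x ≤ C ^ q * (1 + ‖x‖) ^ (-(4 * q)) := hhle x
        _ = C ^ q * ((1 + ‖x‖) ^ (-(2 * (N:ℝ) / 3)) * (1 + ‖x‖) ^ (-(2 * (N:ℝ)))) := by
            rw [e1]
        _ ≤ C ^ q * ((1 + r) ^ (-(2 * (N:ℝ) / 3)) * (1 + ‖x‖) ^ (-(2 * (N:ℝ)))) := by
            apply mul_le_mul_of_nonneg_left _ (Real.rpow_nonneg hC q)
            exact mul_le_mul_of_nonneg_right e2 (Real.rpow_nonneg (hbase x).le _)
        _ = (C ^ q * (1 + r) ^ (-(2 * (N:ℝ) / 3))) * (1 + ‖x‖) ^ (-(2 * (N:ℝ))) := by ring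
    have step2 : (∫ x in {x : EuclideanSpace ℝ (Fin N) | r ≤ ‖x‖},
            (C ^ q * (1 + r) ^ (-(2 * (N:ℝ) / 3))) * (1 + ‖x‖) ^ (-(2 * (N:ℝ))))
        ≤ (C ^ q * (1 + r) ^ (-(2 * (N:ℝ) / 3))) * I := by
      rw [integral_const_mul]
      refine mul_le_mul_of_nonneg_left ?_ (by positivity)
      exact setIntegral_le_integral hI_int
        (Eventually.of_forall fun x => Real.rpow_nonneg (hbase x).le _)
    calc _ ≤ _ := step1
      _ ≤ (C ^ q * (1 + r) ^ (-(2 * (N:ℝ) / 3))) * I := step2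
      _ = (C ^ q * I) * (1 + r) ^ (-(2 * (N:ℝ) / 3)) := by ring
  -- the inner integral as a function of the radius
  set F : ℝ → ℝ := fun r => ∫ x in {x : EuclideanSpace ℝ (Fin N) | r ≤ ‖x‖}, h x with hF_def
  have hF_anti : Antitone F := by
    intro a b hab
    exact setIntegral_mono_set hh_int.integrableOn
      (Eventually.of_forall fun x => hh0 x)
      (HasSubset.Subset.eventuallyLE fun x hx => le_trans hab hx)
  have hF0 : ∀ r, 0 ≤ F r := fun r => setIntegral_nonneg (hSm r) fun x _ => hh0 x
  have hFm : Measurable F := hF_anti.measurable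
  set K : ℝ := (C ^ q * I) ^ e with hK_def
  have hK0 : 0 ≤ K := Real.rpow_nonneg (by positivity) e
  have hexp : (-(2 * (N:ℝ) / 3)) * e = -2 := by
    rw [he_def]
    field_simp
  have key2 : ∀ R t : ℝ, 0 ≤ R →
      F (R + |t|) ^ e ≤ K * (1 + (R + |t|)) ^ (-2:ℝ) := by
    intro R t hR
    have hr : (0:ℝ) ≤ R + |t| := by positivity
    have hr1 : (0:ℝ) < 1 + (R + |t|) := by linarith
    have h1 : F (R + |t|) ^ e ≤ ((C ^ q * I) * (1 + (R + |t|)) ^ (-(2 * (N:ℝ) / 3))) ^ e :=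
      Real.rpow_le_rpow (hF0 _) (key _ hr) he.le
    rwa [Real.mul_rpow (by positivity) (Real.rpow_nonneg hr1.le _),
      ← Real.rpow_mul hr1.le, hexp] at h1
  have hGm : ∀ R : ℝ, Measurable fun t : ℝ => F (R + |t|) ^ e := by
    intro R
    fun_prop
  have hG0 : ∀ R t : ℝ, 0 ≤ F (R + |t|) ^ e := fun R t => Real.rpow_nonneg (hF0 _) e
  have hfr1 : (Module.finrank ℝ ℝ : ℝ) < 2 := by
    rw [Module.finrank_self]; norm_num
  have hGint : ∀ R : ℝ, 0 ≤ R → Integrable fun t : ℝ => F (R + |t|) ^ e := by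
    intro R hR
    refine ((integrable_one_add_norm (E := ℝ) (r := 2) hfr1).const_mul K).mono'
      (hGm R).aestronglyMeasurable ?_
    filter_upwards with t
    rw [Real.norm_eq_abs, abs_of_nonneg (hG0 R t)]
    refine le_trans (key2 R t hR) ?_
    have h2 : (1 + (R + |t|) : ℝ) ^ (-2:ℝ) ≤ (1 + ‖t‖) ^ (-2:ℝ) := by
      rw [Real.norm_eq_abs]
      exact Real.rpow_le_rpow_of_nonpos (by positivity) (by linarith) (by norm_num)
    exact mul_le_mul_of_nonneg_left h2 hK0
  -- the decay of the norm
  set J : ℝ := ∫ t : ℝ, (1 + ‖t‖) ^ (-(3/2 : ℝ)) with hJ_def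
  have hJ_int : Integrable fun t : ℝ => (1 + ‖t‖) ^ (-(3/2 : ℝ)) :=
    integrable_one_add_norm (E := ℝ) (by rw [Module.finrank_self]; norm_num)
  have hJ0 : 0 ≤ J := integral_nonneg fun t => Real.rpow_nonneg (by positivity) _
  have hbound : ∀ R : ℝ, 0 ≤ R →
      (∫ t : ℝ, F (R + |t|) ^ e) ≤ (K * J) * (1 + R) ^ (-(1/2 : ℝ)) := by
    intro R hR
    have hR1 : (0:ℝ) < 1 + R := by linarith
    have hpt : ∀ t : ℝ, F (R + |t|) ^ e
        ≤ (K * (1 + R) ^ (-(1/2 : ℝ))) * (1 + ‖t‖) ^ (-(3/2 : ℝ)) := by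
      intro t
      refine le_trans (key2 R t hR) ?_
      have hrt : (0:ℝ) < 1 + (R + |t|) := by positivity
      have e1 : (1 + (R + |t|) : ℝ) ^ (-2:ℝ)
          = (1 + (R + |t|)) ^ (-(1/2 : ℝ)) * (1 + (R + |t|)) ^ (-(3/2 : ℝ)) := by
        rw [← Real.rpow_add hrt]; norm_num
      have e2 : (1 + (R + |t|) : ℝ) ^ (-(1/2 : ℝ)) ≤ (1 + R) ^ (-(1/2 : ℝ)) :=
        Real.rpow_le_rpow_of_nonpos hR1 (by have := abs_nonneg t; linarith) (by norm_num)
      have e3 : (1 + (R + |t|) : ℝ) ^ (-(3/2 : ℝ)) ≤ (1 + |t|) ^ (-(3/2 : ℝ)) :=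
        Real.rpow_le_rpow_of_nonpos (by positivity) (by linarith) (by norm_num)
      calc K * (1 + (R + |t|)) ^ (-2:ℝ)
          = K * ((1 + (R + |t|)) ^ (-(1/2 : ℝ)) * (1 + (R + |t|)) ^ (-(3/2 : ℝ))) := by
            rw [e1]
        _ ≤ K * ((1 + R) ^ (-(1/2 : ℝ)) * (1 + |t|) ^ (-(3/2 : ℝ))) := by
            refine mul_le_mul_of_nonneg_left ?_ hK0
            exact mul_le_mul e2 e3 (Real.rpow_nonneg hrt.le _) (Real.rpow_nonneg hR1.le _)
        _ = (K * (1 + R) ^ (-(1/2 : ℝ))) * (1 + ‖t‖) ^ (-(3/2 : ℝ)) := by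
            rw [Real.norm_eq_abs]; ring
    calc (∫ t : ℝ, F (R + |t|) ^ e)
        ≤ ∫ t : ℝ, (K * (1 + R) ^ (-(1/2 : ℝ))) * (1 + ‖t‖) ^ (-(3/2 : ℝ)) :=
          integral_mono (hGint R hR) (hJ_int.const_mul _) hpt
      _ = (K * (1 + R) ^ (-(1/2 : ℝ))) * J := integral_const_mul _ _
      _ = (K * J) * (1 + R) ^ (-(1/2 : ℝ)) := by ring
  refine ⟨fun R hR => hGint R hR.le, ?_⟩
  have hub : Tendsto (fun R : ℝ => Real.sqrt ((K * J) * (1 + R) ^ (-(1/2 : ℝ))))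
      atTop (𝓝 0) := by
    have h1 : Tendsto (fun R : ℝ => (1 + R) ^ (-(1/2 : ℝ))) atTop (𝓝 0) :=
      (tendsto_rpow_neg_atTop (by norm_num)).comp (tendsto_atTop_add_const_left _ 1 tendsto_id)
    have h2 : Tendsto (fun R : ℝ => (K * J) * (1 + R) ^ (-(1/2 : ℝ))) atTop (𝓝 0) := by
      simpa using h1.const_mul (K * J)
    have h3 := (Real.continuous_sqrt.tendsto 0).comp h2
    simpa [Function.comp_def] using h3
  refine tendsto_of_tendsto_of_tendsto_of_le_of_le' tendsto_const_nhds hub ?_ ?_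
  · filter_upwards with R
    exact Real.sqrt_nonneg _
  · filter_upwards [eventually_ge_atTop (0:ℝ)] with R hR
    exact Real.sqrt_le_sqrt (hbound R hR)
end
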